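/- Let M(I) and M(I') be commuting von Neumann algebras on a Hilbert space H₀ with a joint cyclic and separating vector Ω, let ξ ∈ H₀, and define the operator A_ξ with domain M(I')Ω by A_ξ(yΩ) = yξ for y ∈ M(I'). If ξ lies in the domain of the Tomita operator S_I (the closure of xΩ ↦ x*Ω for x ∈ M(I)), then A_ξ is well-defined and preclosed. -/

import Mathlib

open Filter Topology

variable {H₀ : Type*} [NormedAddCommGroup H₀] [InnerProductSpace ℂ H₀] [CompleteSpace H₀]

local notation "⟪" x ", " y "⟫" => @inner ℂ _ _ x y

/-- If `Ω` is separating for `M`, then it is cyclic for the commutant: the span of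
`M.commutant • Ω` is dense. -/
lemma dense_commutant_orbit (M : VonNeumannAlgebra H₀) (Ω : H₀)
    (hseparating : ∀ x : H₀ →L[ℂ] H₀, x ∈ M → x Ω = 0 → x = 0) :
    Dense ((Submodule.span ℂ ((fun y : H₀ →L[ℂ] H₀ => y Ω) '' (M.commutant :
      Set (H₀ →L[ℂ] H₀)))) : Set H₀) := by
  set S : Set H₀ := (fun y : H₀ →L[ℂ] H₀ => y Ω) '' (M.commutant : Set (H₀ →L[ℂ] H₀)) with hS
  set K0 : Submodule ℂ H₀ := Submodule.span ℂ S with hK0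
  set K : Submodule ℂ H₀ := K0.topologicalClosure with hK
  haveI : CompleteSpace K := K0.isClosed_topologicalClosure.completeSpace_coe
  -- invariance of K0 under the commutant
  have hinv0 : ∀ y ∈ M.commutant, ∀ v ∈ K0, y v ∈ K0 := by
    intro y hy v hv
    induction hv using Submodule.span_induction with
    | mem v hv =>
      obtain ⟨z, hz, rfl⟩ := hv
      exact Submodule.subset_span ⟨y * z, mul_mem hy hz, rfl⟩
    | zero => simpa using K0.zero_mem
    | add a b _ _ ha hb => rw [map_add]; exact K0.add_mem ha hb
    | smul c a _ ha => rw [map_smul]; exact K0.smul_mem c ha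
  -- invariance of K under the commutant
  have hinv : ∀ y ∈ M.commutant, ∀ v ∈ K, y v ∈ K := by
    intro y hy v hv
    have h1 : Set.MapsTo y (K0 : Set H₀) (K0 : Set H₀) := fun a ha => hinv0 y hy a ha
    have h2 := h1.closure y.continuous
    have : (K : Set H₀) = closure (K0 : Set H₀) := K0.topologicalClosure_coe
    rw [← SetLike.mem_coe, this] at hv ⊢
    exact h2 hv
  -- invariance of Kᗮ under the commutant
  have hinvp : ∀ y ∈ M.commutant, ∀ v ∈ Kᗮ, y v ∈ Kᗮ := by
    intro y hy v hv
    rw [Submodule.mem_orthogonal] at hv ⊢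
    intro u hu
    have : ⟪u, y v⟫ = ⟪(ContinuousLinearMap.adjoint y) u, v⟫ :=
      (ContinuousLinearMap.adjoint_inner_left y v u).symm
    rw [this]
    have hyst : star y ∈ M.commutant := star_mem hy
    rw [ContinuousLinearMap.star_eq_adjoint] at hyst
    exact hv _ (hinv _ hyst u hu)
  -- the projection onto K
  set p : H₀ →L[ℂ] H₀ := K.subtypeL ∘L K.orthogonalProjectionOnto with hp
  have hp_mem_self : ∀ u ∈ K, p u = u := by
    intro u hu
    simp only [hp, ContinuousLinearMap.comp_apply, Submodule.subtypeL_apply]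
    exact (Submodule.starProjection_eq_self_iff (K := K)).2 hu
  have hp_mem_orth : ∀ u ∈ Kᗮ, p u = 0 := by
    intro u hu
    simp only [hp, ContinuousLinearMap.comp_apply, Submodule.subtypeL_apply]
    rw [Submodule.orthogonalProjectionOnto_apply_of_mem_orthogonal hu]
    rfl
  have hpK : ∀ v : H₀, p v ∈ K := fun v => (K.orthogonalProjectionOnto v).2
  have hcomm : ∀ y ∈ M.commutant, ∀ v : H₀, p (y v) = y (p v) := by
    intro y hy v
    have hdec : v = p v + (v - p v) := by abel
    have h1 : y v = y (p v) + y (v - p v) := by rw [← map_add]; exact congrArg y hdec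
    have hv2 : v - p v ∈ Kᗮ := Submodule.sub_starProjection_mem_orthogonal (K := K) v
    rw [h1, map_add, hp_mem_self _ (hinv y hy _ (hpK v)),
      hp_mem_orth _ (hinvp y hy _ hv2), add_zero]
  have hpM : p ∈ M := by
    rw [← VonNeumannAlgebra.commutant_commutant M, VonNeumannAlgebra.mem_commutant_iff]
    intro g hg
    ext v
    exact (hcomm g hg v).symm
  have hΩK : Ω ∈ K := by
    have : Ω ∈ S := ⟨1, one_mem M.commutant, by simp⟩
    exact K0.le_topologicalClosure (Submodule.subset_span this)
  have hq : (1 - p : H₀ →L[ℂ] H₀) = 0 := by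
    refine hseparating _ (sub_mem (one_mem M) hpM) ?_
    simp [hp_mem_self Ω hΩK]
  have hp1 : p = 1 := by
    have := sub_eq_zero.mp hq
    exact this.symm
  intro v
  have : v ∈ (K : Set H₀) := by
    have : p v = v := by rw [hp1]; rfl
    rw [← this]; exact hpK v
  rwa [K0.topologicalClosure_coe] at this

theorem stmt9 (M : VonNeumannAlgebra H₀) (Ω : H₀)
    (hcyclic : Dense ((fun x : H₀ →L[ℂ] H₀ => x Ω) '' (M : Set (H₀ →L[ℂ] H₀))))
    (hseparating : ∀ x : H₀ →L[ℂ] H₀, x ∈ M → x Ω = 0 → x = 0)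
    (ξ : H₀)
    (hξ : ∃ (x : ℕ → H₀ →L[ℂ] H₀) (η : H₀), (∀ n, x n ∈ M) ∧
      Tendsto (fun n => x n Ω) atTop (nhds ξ) ∧
      Tendsto (fun n => star (x n) Ω) atTop (nhds η)) :
    (∀ y z : H₀ →L[ℂ] H₀, y ∈ M.commutant → z ∈ M.commutant → y Ω = z Ω → y ξ = z ξ) ∧
    (∀ (y : ℕ → H₀ →L[ℂ] H₀) (η : H₀), (∀ n, y n ∈ M.commutant) →
      Tendsto (fun n => y n Ω) atTop (nhds 0) →
      Tendsto (fun n => y n ξ) atTop (nhds η) → η = 0) := by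
  obtain ⟨x, η', hxM, hxΩ, hxstar⟩ := hξ
  have comm : ∀ (y : H₀ →L[ℂ] H₀), y ∈ M.commutant → ∀ n, x n * y = y * x n := by
    intro y hy n
    exact (VonNeumannAlgebra.mem_commutant_iff.mp hy) (x n) (hxM n)
  constructor
  · -- well-definedness
    intro y z hy hz hyz
    have key : ∀ w : H₀ →L[ℂ] H₀, w ∈ M.commutant → w Ω = 0 → w ξ = 0 := by
      intro w hw hwΩ
      have h1 : Tendsto (fun n => w (x n Ω)) atTop (nhds (w ξ)) :=
        (w.continuous.tendsto ξ).comp hxΩ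
      have h2 : ∀ n, w (x n Ω) = 0 := by
        intro n
        have : (w * x n) Ω = (x n * w) Ω := by rw [comm w hw n]
        calc w (x n Ω) = (w * x n) Ω := rfl
          _ = (x n * w) Ω := this
          _ = x n (w Ω) := rfl
          _ = 0 := by rw [hwΩ, map_zero]
      have h3 : Tendsto (fun _ : ℕ => (0 : H₀)) atTop (nhds (w ξ)) := by
        simpa [h2] using h1
      exact tendsto_nhds_unique h3 tendsto_const_nhds
    have := key (y - z) (sub_mem hy hz) (by simp [hyz])
    simpa [sub_eq_zero] using this
  · -- preclosedness
    intro y η hyM hyΩ hyξ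
    have hdense := dense_commutant_orbit M Ω hseparating
    have hinner : ∀ z : H₀ →L[ℂ] H₀, z ∈ M.commutant → ⟪z Ω, η⟫ = 0 := by
      intro z hz
      -- step A : ⟪z Ω, y n ξ⟫ = ⟪z η', y n Ω⟫
      have stepA : ∀ n, ⟪z Ω, y n ξ⟫ = ⟪z η', y n Ω⟫ := by
        intro n
        have hc := VonNeumannAlgebra.mem_commutant_iff.mp (hyM n)
        have h1 : Tendsto (fun m => x m (y n Ω)) atTop (nhds (y n ξ)) := by
          have := ((y n).continuous.tendsto ξ).comp hxΩ
          have heq : ∀ m, y n (x m Ω) = x m (y n Ω) := by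
            intro m
            calc y n (x m Ω) = (y n * x m) Ω := rfl
              _ = (x m * y n) Ω := by rw [hc (x m) (hxM m)]
              _ = x m (y n Ω) := rfl
          have hfe : (fun m => y n (x m Ω)) = fun m => x m (y n Ω) := funext heq
          rw [← hfe]
          exact this
        have h2 : Tendsto (fun m => ⟪z Ω, x m (y n Ω)⟫) atTop (nhds ⟪z Ω, y n ξ⟫) :=
          tendsto_const_nhds.inner h1
        have h3 : ∀ m, ⟪z Ω, x m (y n Ω)⟫ = ⟪z (star (x m) Ω), y n Ω⟫ := by
          intro m
          have ha : ⟪(ContinuousLinearMap.adjoint (x m)) (z Ω), y n Ω⟫ = ⟪z Ω, x m (y n Ω)⟫ :=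
            ContinuousLinearMap.adjoint_inner_left (x m) (y n Ω) (z Ω)
          rw [← ha, ← ContinuousLinearMap.star_eq_adjoint]
          congr 1
          have hstM : star (x m) ∈ M := star_mem (hxM m)
          calc star (x m) (z Ω) = (star (x m) * z) Ω := rfl
            _ = (z * star (x m)) Ω := by
                rw [VonNeumannAlgebra.mem_commutant_iff.mp hz (star (x m)) hstM]
            _ = z (star (x m) Ω) := rfl
        have h4 : Tendsto (fun m => ⟪z (star (x m) Ω), y n Ω⟫) atTop
            (nhds ⟪z η', y n Ω⟫) := by
          have hz' : Tendsto (fun m => z (star (x m) Ω)) atTop (nhds (z η')) :=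
            (z.continuous.tendsto η').comp hxstar
          exact hz'.inner tendsto_const_nhds
        rw [← funext h3] at h4
        exact tendsto_nhds_unique h2 h4
      have l1 : Tendsto (fun n => ⟪z Ω, y n ξ⟫) atTop (nhds ⟪z Ω, η⟫) :=
        tendsto_const_nhds.inner hyξ
      have l2 : Tendsto (fun n => ⟪z η', y n Ω⟫) atTop (nhds (0 : ℂ)) := by
        have := Filter.Tendsto.inner (𝕜 := ℂ) (tendsto_const_nhds : Tendsto (fun _ : ℕ => z η') atTop (nhds (z η'))) hyΩ
        simpa using this
      rw [funext stepA] at l1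
      exact tendsto_nhds_unique l1 l2
    -- conclude η = 0 by density
    refine Dense.eq_zero_of_inner_left ℂ hdense ?_
    intro v hv
    rw [SetLike.mem_coe] at hv
    induction hv using Submodule.span_induction with
    | mem v hv =>
      obtain ⟨z, hz, rfl⟩ := hv
      exact inner_eq_zero_symm.mp (hinner z hz)
    | zero => simp
    | add a b _ _ ha hb => rw [inner_add_right, ha, hb, add_zero]
    | smul c a _ ha => rw [inner_smul_right, ha, mul_zero]
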